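/- Let D ⊆ ℝᵏ be a Whitney 1-regular compact set and let f, g : D → ℝ be Lipschitz functions with f ≤ g pointwise. Then the prism K = { (x, t) ∈ ℝᵏ × ℝ : x ∈ D, f(x) ≤ t ≤ g(x) } is a Whitney 1-regular compact set in ℝ^{k+1}. -/

import Mathlib

/-- A set `K` is Whitney 1-regular if there is `C > 0` such that any two of its
points are joined by a rectifiable path in `K` of length at most `C` times
their distance. -/
def WhitneyOneRegular {E : Type*} [PseudoEMetricSpace E] (K : Set E) : Prop :=
  ∃ C : ℝ, 0 < C ∧ ∀ x ∈ K, ∀ y ∈ K, ∃ γ : ℝ → E,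
    ContinuousOn γ (Set.Icc 0 1) ∧ γ 0 = x ∧ γ 1 = y ∧
    Set.MapsTo γ (Set.Icc 0 1) K ∧
    eVariationOn γ (Set.Icc 0 1) ≤ ENNReal.ofReal C * edist x y

/-- Domination lemma: if the increments of `F` are bounded by the sum of increments of
`G₁` and `G₂`, then the variation of `F` is at most the sum of the variations. -/
lemma evar_le_add {α E F G : Type*} [LinearOrder α] [PseudoEMetricSpace E]
    [PseudoEMetricSpace F] [PseudoEMetricSpace G] {s : Set α}
    {F₀ : α → E} {G₁ : α → F} {G₂ : α → G}
    (h : ∀ x ∈ s, ∀ y ∈ s, edist (F₀ x) (F₀ y) ≤ edist (G₁ x) (G₁ y) + edist (G₂ x) (G₂ y)) :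
    eVariationOn F₀ s ≤ eVariationOn G₁ s + eVariationOn G₂ s := by
  apply iSup_le
  rintro ⟨n, u, hu, us⟩
  calc ∑ i ∈ Finset.range n, edist (F₀ (u (i+1))) (F₀ (u i))
      ≤ ∑ i ∈ Finset.range n,
          (edist (G₁ (u (i+1))) (G₁ (u i)) + edist (G₂ (u (i+1))) (G₂ (u i))) :=
        Finset.sum_le_sum fun i _ => h _ (us _) _ (us _)
    _ = (∑ i ∈ Finset.range n, edist (G₁ (u (i+1))) (G₁ (u i)))
        + ∑ i ∈ Finset.range n, edist (G₂ (u (i+1))) (G₂ (u i)) := Finset.sum_add_distrib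
    _ ≤ _ := add_le_add (eVariationOn.sum_le (n := n) hu us) (eVariationOn.sum_le (n := n) hu us)

lemma l2_edist_le_add {α β : Type*} [SeminormedAddCommGroup α] [SeminormedAddCommGroup β]
    (z w : WithLp 2 (α × β)) :
    edist z w ≤ edist z.fst w.fst + edist z.snd w.snd := by
  rw [WithLp.prod_edist_eq_of_L2]
  set a := edist z.fst w.fst
  set b := edist z.snd w.snd
  have h1 : a ^ 2 + b ^ 2 ≤ (a + b) ^ 2 := by
    rw [add_sq]
    calc a ^ 2 + b ^ 2 ≤ a ^ 2 + (2 * a * b + b ^ 2) := by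
          exact add_le_add le_rfl le_add_self
      _ = a ^ 2 + 2 * a * b + b ^ 2 := by ring
  calc (a ^ 2 + b ^ 2) ^ (1/2 : ℝ) ≤ ((a + b) ^ 2) ^ (1/2 : ℝ) :=
        ENNReal.rpow_le_rpow h1 (by norm_num)
    _ = a + b := by
        rw [← ENNReal.rpow_natCast (a + b) 2, ← ENNReal.rpow_mul]
        norm_num

lemma l2_edist_fst_le {α β : Type*} [SeminormedAddCommGroup α] [SeminormedAddCommGroup β]
    (z w : WithLp 2 (α × β)) : edist z.fst w.fst ≤ edist z w := by
  rw [WithLp.prod_edist_eq_of_L2]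
  set a := edist z.fst w.fst
  set b := edist z.snd w.snd
  calc a = (a ^ 2) ^ (1/2 : ℝ) := by
        rw [← ENNReal.rpow_natCast a 2, ← ENNReal.rpow_mul]; norm_num
    _ ≤ (a ^ 2 + b ^ 2) ^ (1/2 : ℝ) := ENNReal.rpow_le_rpow le_self_add (by norm_num)

lemma l2_edist_snd_le {α β : Type*} [SeminormedAddCommGroup α] [SeminormedAddCommGroup β]
    (z w : WithLp 2 (α × β)) : edist z.snd w.snd ≤ edist z w := by
  rw [WithLp.prod_edist_eq_of_L2]
  set a := edist z.fst w.fst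
  set b := edist z.snd w.snd
  calc b = (b ^ 2) ^ (1/2 : ℝ) := by
        rw [← ENNReal.rpow_natCast b 2, ← ENNReal.rpow_mul]; norm_num
    _ ≤ (a ^ 2 + b ^ 2) ^ (1/2 : ℝ) := ENNReal.rpow_le_rpow le_add_self (by norm_num)

lemma real_edist_abs (a b : ℝ) : edist a b = ENNReal.ofReal |a - b| := by
  rw [edist_dist, Real.dist_eq]

lemma edist_max_le (a a' c c' : ℝ) :
    edist (max a c) (max a' c') ≤ edist a a' + edist c c' := by
  rw [real_edist_abs, real_edist_abs, real_edist_abs,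
    ← ENNReal.ofReal_add (abs_nonneg _) (abs_nonneg _)]
  refine ENNReal.ofReal_le_ofReal ((abs_max_sub_max_le_max a c a' c').trans ?_)
  exact max_le (le_add_of_nonneg_right (abs_nonneg _)) (le_add_of_nonneg_left (abs_nonneg _))

lemma edist_min_le (a a' c c' : ℝ) :
    edist (min a c) (min a' c') ≤ edist a a' + edist c c' := by
  rw [real_edist_abs, real_edist_abs, real_edist_abs,
    ← ENNReal.ofReal_add (abs_nonneg _) (abs_nonneg _)]
  refine ENNReal.ofReal_le_ofReal ((abs_min_sub_min_le_max a c a' c').trans ?_)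
  exact max_le (le_add_of_nonneg_right (abs_nonneg _)) (le_add_of_nonneg_left (abs_nonneg _))

lemma eVariationOn_id_Icc' : eVariationOn (id : ℝ → ℝ) (Set.Icc 0 1) ≤ 1 := by
  have := MonotoneOn.eVariationOn_le (f := (id : ℝ → ℝ)) (s := Set.Icc (0:ℝ) 1)
    (monotoneOn_id) (a := 0) (b := 1)
    ⟨le_rfl, zero_le_one⟩ ⟨zero_le_one, le_rfl⟩
  rw [Set.inter_self] at this
  simpa using this

/-- The prism between the graphs of two Lipschitz functions over a Whitney
1-regular compact set is a Whitney 1-regular compact set in `ℝ^(k+1)`. -/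
theorem stmt_4 {k : ℕ} (D : Set (EuclideanSpace ℝ (Fin k)))
    (hD : IsCompact D) (hreg : WhitneyOneRegular D)
    (f g : EuclideanSpace ℝ (Fin k) → ℝ) (Lf Lg : NNReal)
    (hf : LipschitzOnWith Lf f D) (hg : LipschitzOnWith Lg g D)
    (hfg : ∀ x ∈ D, f x ≤ g x) :
    IsCompact {z : WithLp 2 (EuclideanSpace ℝ (Fin k) × ℝ) |
        z.ofLp.1 ∈ D ∧ f z.ofLp.1 ≤ z.ofLp.2 ∧ z.ofLp.2 ≤ g z.ofLp.1} ∧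
    WhitneyOneRegular {z : WithLp 2 (EuclideanSpace ℝ (Fin k) × ℝ) |
        z.ofLp.1 ∈ D ∧ f z.ofLp.1 ≤ z.ofLp.2 ∧ z.ofLp.2 ≤ g z.ofLp.1} := by
  classical
  set K : Set (WithLp 2 ((EuclideanSpace ℝ (Fin k)) × ℝ)) :=
    {z : WithLp 2 ((EuclideanSpace ℝ (Fin k)) × ℝ) | z.ofLp.1 ∈ D ∧ f z.ofLp.1 ≤ z.ofLp.2 ∧ z.ofLp.2 ≤ g z.ofLp.1} with hKdef
  set L := WithLp.prodContinuousLinearEquiv 2 ℝ (EuclideanSpace ℝ (Fin k)) ℝ with hL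
  -- compactness
  have hcomp : IsCompact K := by
    set φ : (EuclideanSpace ℝ (Fin k)) × ℝ → WithLp 2 ((EuclideanSpace ℝ (Fin k)) × ℝ) :=
      fun w => L.symm (w.1, (1 - w.2) * f w.1 + w.2 * g w.1) with hφ
    have himg : φ '' (D ×ˢ Set.Icc (0:ℝ) 1) = K := by
      ext z
      constructor
      · rintro ⟨⟨x, t⟩, ⟨hxD, ht0, ht1⟩, rfl⟩
        refine ⟨hxD, ?_, ?_⟩
        · have := hfg x hxD
          show f x ≤ (1 - t) * f x + t * g x
          nlinarith
        · have := hfg x hxD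
          show (1 - t) * f x + t * g x ≤ g x
          nlinarith
      · rintro ⟨hxD, hl, hu⟩
        rcases lt_or_eq_of_le (hfg _ hxD) with hlt | heq
        · refine ⟨(z.ofLp.1, (z.ofLp.2 - f z.ofLp.1) / (g z.ofLp.1 - f z.ofLp.1)), ⟨hxD, ?_, ?_⟩, ?_⟩
          · exact div_nonneg (by linarith) (by linarith)
          · rw [div_le_one (by linarith)]; linarith
          · show WithLp.toLp 2 ((z.ofLp.1, _) : (EuclideanSpace ℝ (Fin k)) × ℝ) = WithLp.toLp 2 (z.ofLp.1, z.ofLp.2)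
            congr 1
            rw [Prod.mk.injEq]
            refine ⟨rfl, ?_⟩
            have hne : g z.ofLp.1 - f z.ofLp.1 ≠ 0 := ne_of_gt (by linarith)
            calc (1 - (z.ofLp.2 - f z.ofLp.1) / (g z.ofLp.1 - f z.ofLp.1)) * f z.ofLp.1
                  + (z.ofLp.2 - f z.ofLp.1) / (g z.ofLp.1 - f z.ofLp.1) * g z.ofLp.1
                = f z.ofLp.1 + (z.ofLp.2 - f z.ofLp.1) / (g z.ofLp.1 - f z.ofLp.1) * (g z.ofLp.1 - f z.ofLp.1) := by ring
              _ = f z.ofLp.1 + (z.ofLp.2 - f z.ofLp.1) := by rw [div_mul_cancel₀ _ hne]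
              _ = z.ofLp.2 := by ring
        · refine ⟨(z.ofLp.1, 0), ⟨hxD, le_rfl, zero_le_one⟩, ?_⟩
          show WithLp.toLp 2 ((z.ofLp.1, (1 - 0) * f z.ofLp.1 + 0 * g z.ofLp.1) : (EuclideanSpace ℝ (Fin k)) × ℝ) = WithLp.toLp 2 (z.ofLp.1, z.ofLp.2)
          congr 1
          rw [Prod.mk.injEq]
          constructor
          · rfl
          · have : z.ofLp.2 = f z.ofLp.1 := le_antisymm (heq ▸ hu) hl
            rw [this]; ring
    rw [← himg]
    refine (hD.prod isCompact_Icc).image_of_continuousOn ?_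
    refine L.symm.continuous.comp_continuousOn (ContinuousOn.prodMk continuousOn_fst ?_)
    have hfc : ContinuousOn (fun w : (EuclideanSpace ℝ (Fin k)) × ℝ => f w.1) (D ×ˢ Set.Icc (0:ℝ) 1) :=
      hf.continuousOn.comp continuousOn_fst fun w hw => hw.1
    have hgc : ContinuousOn (fun w : (EuclideanSpace ℝ (Fin k)) × ℝ => g w.1) (D ×ˢ Set.Icc (0:ℝ) 1) :=
      hg.continuousOn.comp continuousOn_fst fun w hw => hw.1
    exact ((continuousOn_const.sub continuousOn_snd).mul hfc).add (continuousOn_snd.mul hgc)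
  refine ⟨hcomp, ?_⟩
  -- Whitney regularity
  obtain ⟨C, hC, hW⟩ := hreg
  refine ⟨(1 + (Lf : ℝ) + Lg) * C + 1, by positivity, ?_⟩
  rintro p ⟨hpD, hpf, hpg⟩ q ⟨hqD, hqf, hqg⟩
  obtain ⟨γ, hγc, hγ0, hγ1, hγm, hγv⟩ := hW p.ofLp.1 hpD q.ofLp.1 hqD
  set l : ℝ → ℝ := fun u => p.ofLp.2 + u * (q.ofLp.2 - p.ofLp.2) with hldef
  set h : ℝ → ℝ := fun u => max (f (γ u)) (min (g (γ u)) (l u)) with hhdef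
  set z : ℝ → WithLp 2 ((EuclideanSpace ℝ (Fin k)) × ℝ) := fun u => L.symm (γ u, h u) with hzdef
  have hz1 : ∀ u, (z u).ofLp.1 = γ u := fun u => rfl
  have hz2 : ∀ u, (z u).ofLp.2 = h u := fun u => rfl
  have hl0 : l 0 = p.ofLp.2 := by simp [hldef]
  have hl1 : l 1 = q.ofLp.2 := by simp [hldef]
  have hh0 : h 0 = p.ofLp.2 := by
    rw [hhdef]; simp only [hγ0, hl0]
    rw [min_eq_right hpg, max_eq_right hpf]
  have hh1 : h 1 = q.ofLp.2 := by
    rw [hhdef]; simp only [hγ1, hl1]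
    rw [min_eq_right hqg, max_eq_right hqf]
  have hmaps : Set.MapsTo z (Set.Icc 0 1) K := by
    intro u hu
    have hγu := hγm hu
    refine ⟨hγu, le_max_left _ _, ?_⟩
    exact max_le (hfg _ hγu) (min_le_left _ _)
  -- continuity
  have hfγ : ContinuousOn (fun u => f (γ u)) (Set.Icc (0:ℝ) 1) :=
    hf.continuousOn.comp hγc hγm
  have hgγ : ContinuousOn (fun u => g (γ u)) (Set.Icc (0:ℝ) 1) :=
    hg.continuousOn.comp hγc hγm
  have hlc : ContinuousOn l (Set.Icc (0:ℝ) 1) :=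
    (continuous_const.add (continuous_id.mul continuous_const)).continuousOn
  have hhc : ContinuousOn h (Set.Icc (0:ℝ) 1) := hfγ.sup (hgγ.inf hlc)
  have hzc : ContinuousOn z (Set.Icc (0:ℝ) 1) :=
    L.symm.continuous.comp_continuousOn (hγc.prodMk hhc)
  -- variation bounds
  set A := edist p q with hA
  have hxyA : edist p.ofLp.1 q.ofLp.1 ≤ A := l2_edist_fst_le p q
  have hstA : edist p.ofLp.2 q.ofLp.2 ≤ A := l2_edist_snd_le p q
  have hγv' : eVariationOn γ (Set.Icc 0 1) ≤ ENNReal.ofReal C * A :=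
    hγv.trans (mul_le_mul_right hxyA _)
  have hvfγ : eVariationOn (fun u => f (γ u)) (Set.Icc 0 1)
      ≤ (Lf : ENNReal) * eVariationOn γ (Set.Icc 0 1) :=
    hf.comp_eVariationOn_le hγm
  have hvgγ : eVariationOn (fun u => g (γ u)) (Set.Icc 0 1)
      ≤ (Lg : ENNReal) * eVariationOn γ (Set.Icc 0 1) :=
    hg.comp_eVariationOn_le hγm
  have hllip : LipschitzWith ‖q.ofLp.2 - p.ofLp.2‖₊ l := by
    intro a b
    rw [edist_nndist, edist_nndist, nndist_eq_nnnorm, nndist_eq_nnnorm]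
    have : l a - l b = (q.ofLp.2 - p.ofLp.2) * (a - b) := by rw [hldef]; ring
    rw [this]
    rw [← ENNReal.coe_mul, ENNReal.coe_le_coe, ← nnnorm_mul]
  have hvl : eVariationOn l (Set.Icc 0 1) ≤ edist p.ofLp.2 q.ofLp.2 := by
    have := (hllip.lipschitzOnWith (s := Set.univ)).comp_eVariationOn_le
      (g := (id : ℝ → ℝ)) (s := Set.Icc (0:ℝ) 1) (Set.mapsTo_univ _ _)
    have h2 : eVariationOn (l ∘ id) (Set.Icc 0 1) = eVariationOn l (Set.Icc 0 1) := rfl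
    rw [h2] at this
    refine this.trans ?_
    calc (‖q.ofLp.2 - p.ofLp.2‖₊ : ENNReal) * eVariationOn id (Set.Icc 0 1)
        ≤ (‖q.ofLp.2 - p.ofLp.2‖₊ : ENNReal) * 1 := mul_le_mul_right eVariationOn_id_Icc' _
      _ = ENNReal.ofReal |q.ofLp.2 - p.ofLp.2| := by
          rw [mul_one, ← Real.enorm_eq_ofReal_abs, enorm_eq_nnnorm]
      _ = edist p.ofLp.2 q.ofLp.2 := by rw [real_edist_abs, abs_sub_comm]
  have hvmin : eVariationOn (fun u => min (g (γ u)) (l u)) (Set.Icc 0 1)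
      ≤ eVariationOn (fun u => g (γ u)) (Set.Icc 0 1) + eVariationOn l (Set.Icc 0 1) :=
    evar_le_add fun a _ b _ => edist_min_le _ _ _ _
  have hvh : eVariationOn h (Set.Icc 0 1)
      ≤ eVariationOn (fun u => f (γ u)) (Set.Icc 0 1)
        + eVariationOn (fun u => min (g (γ u)) (l u)) (Set.Icc 0 1) :=
    evar_le_add fun a _ b _ => edist_max_le _ _ _ _
  have hvz : eVariationOn z (Set.Icc 0 1)
      ≤ eVariationOn γ (Set.Icc 0 1) + eVariationOn h (Set.Icc 0 1) :=
    evar_le_add fun a _ b _ => l2_edist_le_add (z a) (z b)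
  have hmain : eVariationOn z (Set.Icc 0 1)
      ≤ (1 + (Lf : ENNReal) + (Lg : ENNReal)) * (ENNReal.ofReal C * A) + A := by
    calc eVariationOn z (Set.Icc 0 1)
        ≤ eVariationOn γ (Set.Icc 0 1) + eVariationOn h (Set.Icc 0 1) := hvz
      _ ≤ eVariationOn γ (Set.Icc 0 1)
          + ((Lf : ENNReal) * eVariationOn γ (Set.Icc 0 1)
            + ((Lg : ENNReal) * eVariationOn γ (Set.Icc 0 1) + edist p.ofLp.2 q.ofLp.2)) := by
          refine add_le_add le_rfl (hvh.trans (add_le_add hvfγ (hvmin.trans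
            (add_le_add hvgγ hvl))))
      _ ≤ ENNReal.ofReal C * A
          + ((Lf : ENNReal) * (ENNReal.ofReal C * A)
            + ((Lg : ENNReal) * (ENNReal.ofReal C * A) + A)) := by
          gcongr
      _ = (1 + (Lf : ENNReal) + (Lg : ENNReal)) * (ENNReal.ofReal C * A) + A := by ring
  have hcoef : ENNReal.ofReal ((1 + (Lf : ℝ) + Lg) * C + 1) * A
      = (1 + (Lf : ENNReal) + (Lg : ENNReal)) * (ENNReal.ofReal C * A) + A := by
    rw [ENNReal.ofReal_add (by positivity) zero_le_one,
      ENNReal.ofReal_mul (by positivity), ENNReal.ofReal_one,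
      ENNReal.ofReal_add (by positivity) (NNReal.coe_nonneg _),
      ENNReal.ofReal_add zero_le_one (NNReal.coe_nonneg _),
      ENNReal.ofReal_one, ENNReal.ofReal_coe_nnreal, ENNReal.ofReal_coe_nnreal]
    ring
  refine ⟨z, hzc, ?_, ?_, hmaps, ?_⟩
  · show L.symm (γ 0, h 0) = p
    rw [hγ0, hh0]
    rfl
  · show L.symm (γ 1, h 1) = q
    rw [hγ1, hh1]
    rfl
  · rw [hcoef]
    exact hmain
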